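/- (Lemma 'recursive', main identity.) With notation as in the context, for every n ≥ 2 one has γ_n = q_n·Φ + β^{n−1}·α^{−(n−1)}·γ₁ in R. (In the paper this reads: for all n ≥ 2, γ_n = q_nΦ + (p^{(n−1)(k−1)}/α^{n−1})·γ₁ in the group ring O_𝔭[𝒢(n)].) -/
import Mathlib


/-- Lemma `recursive`: for all `n ≥ 2`,
`γ n = q n · Φ + β^(n-1) · α^(-(n-1)) · γ 1`. -/
theorem gamma_eq_q_mul_phi {R : Type*} [CommRing R] (p t : R) (α : Rˣ) (s s' : R)
    (hss : s * s' = 1) (γ : ℕ → R)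
    (hγ1 : γ 1 = ((α : R) + p * t ^ 2 * ((α⁻¹ : Rˣ) : R)) - t * (s + s'))
    (hγ2 : γ 2 = ((α : R) + p * t ^ 2 * ((α⁻¹ : Rˣ) : R)) * γ 1 - t ^ 2 * (p - 1))
    (hγrec : ∀ n, 3 ≤ n →
      γ n = ((α : R) + p * t ^ 2 * ((α⁻¹ : Rˣ) : R)) * γ (n - 1) - p * t ^ 2 * γ (n - 2))
    (n : ℕ) (hn : 2 ≤ n) :
    γ n = ((α : R) ^ n * ∑ j ∈ Finset.range (n - 1), (p * t ^ 2 * ((α⁻¹ : Rˣ) : R) ^ 2) ^ j) *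
        ((1 - t * s * ((α⁻¹ : Rˣ) : R)) * (1 - t * s' * ((α⁻¹ : Rˣ) : R))) +
      (p * t ^ 2) ^ (n - 1) * ((α⁻¹ : Rˣ) : R) ^ (n - 1) * γ 1 := by
  set A : R := (α : R) with hA
  set B : R := ((α⁻¹ : Rˣ) : R) with hB
  have hAB : A * B = 1 := by
    rw [hA, hB]; exact_mod_cast α.mul_inv
  have key : ∀ n : ℕ, 1 ≤ n →
      γ n = (A ^ n * ∑ j ∈ Finset.range (n - 1), (p * t ^ 2 * B ^ 2) ^ j) *
        ((1 - t * s * B) * (1 - t * s' * B)) +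
      (p * t ^ 2) ^ (n - 1) * B ^ (n - 1) * γ 1 := by
    intro n
    induction n using Nat.strong_induction_on with
    | _ n ih =>
      intro hn1
      match n, hn1 with
      | 1, _ => simp
      | 2, _ =>
        rw [hγ2, hγ1]
        rw [show (2:ℕ) - 1 = 1 from rfl, Finset.sum_range_one, pow_zero, pow_one, pow_one,
          mul_one]
        linear_combination (-(t^2*s*s') + p*t^2 + A*t*s' + A*t*s - A*B*t^2*s*s') * hAB
          + (-(t^2)) * hss
      | (m+3), _ =>
        have h1 := ih (m+2) (by omega) (by omega)
        have h2 := ih (m+1) (by omega) (by omega)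
        rw [hγrec (m+3) (by omega)]
        have e1 : m + 3 - 1 = m + 2 := rfl
        have e2 : m + 3 - 2 = m + 1 := rfl
        rw [show m + 2 - 1 = m + 1 from rfl, Finset.sum_range_succ] at h1
        rw [show m + 1 - 1 = m from rfl] at h2
        rw [e1, e2, h1, h2, Finset.sum_range_succ, Finset.sum_range_succ]
        linear_combination (p*t^2*(γ 1)*B^m*(p*t^2)^m
            + A*(p*t^2)*((1 - t*s*B)*(1 - t*s'*B))*A^m*(∑ j ∈ Finset.range m, (p*t^2*B^2)^j)
            - A^2*B*(p*t^2)*((1 - t*s*B)*(1 - t*s'*B))*A^m*(B^m)^2*(p*t^2)^m) * hAB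
  exact key n (by omega)
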